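/- Let A be the 2×2 real matrix with rows (a, b) and (c, d). There exists a nonzero vector v ∈ ℝ² with ‖Av‖ = ‖v‖ if and only if a² + b² + c² + d² ≥ 1 + (det A)². -/

import Mathlib

lemma norm_cond_aux (a b c d : ℝ) (v : EuclideanSpace ℝ (Fin 2)) :
    ‖Matrix.toEuclideanLin !![a, b; c, d] v‖ = ‖v‖ ↔
    (a * v 0 + b * v 1)^2 + (c * v 0 + d * v 1)^2 = (v 0)^2 + (v 1)^2 := by
  have h0 : Matrix.toEuclideanLin !![a, b; c, d] v 0 = a * v 0 + b * v 1 := by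
    simp [Matrix.toEuclideanLin_apply, Matrix.mulVec, dotProduct, Fin.sum_univ_two,
      Matrix.vecHead, Matrix.vecTail]
  have h1 : Matrix.toEuclideanLin !![a, b; c, d] v 1 = c * v 0 + d * v 1 := by
    simp [Matrix.toEuclideanLin_apply, Matrix.mulVec, dotProduct, Fin.sum_univ_two,
      Matrix.vecHead, Matrix.vecTail]
  rw [EuclideanSpace.norm_eq, EuclideanSpace.norm_eq, Fin.sum_univ_two, Fin.sum_univ_two,
    h0, h1]
  simp only [Real.norm_eq_abs, sq_abs]
  exact Real.sqrt_inj (by positivity) (by positivity)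

theorem stmt_0 (a b c d : ℝ) :
    (∃ v : EuclideanSpace ℝ (Fin 2), v ≠ 0 ∧
      ‖Matrix.toEuclideanLin !![a, b; c, d] v‖ = ‖v‖) ↔
    a ^ 2 + b ^ 2 + c ^ 2 + d ^ 2 ≥ 1 + (Matrix.det !![a, b; c, d]) ^ 2 := by
  rw [show Matrix.det !![a, b; c, d] = a * d - b * c by simp [Matrix.det_fin_two_of]]
  constructor
  · rintro ⟨v, hv0, hv⟩
    rw [norm_cond_aux] at hv
    set x := v 0 with hx
    set y := v 1 with hy
    have hne : x ≠ 0 ∨ y ≠ 0 := by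
      by_contra h
      push_neg at h
      apply hv0
      ext i
      fin_cases i
      · exact h.1
      · exact h.2
    have hQ : (a^2+c^2-1)*x^2 + 2*(a*b+c*d)*x*y + (b^2+d^2-1)*y^2 = 0 := by
      linear_combination hv
    have key : (a*b+c*d)^2 - (a^2+c^2-1)*(b^2+d^2-1) ≥ 0 := by
      rcases hne with h | h
      · have hx2 : 0 < x^2 := by positivity
        have h1 : ((b^2+d^2-1)*y + (a*b+c*d)*x)^2 =
            ((a*b+c*d)^2 - (a^2+c^2-1)*(b^2+d^2-1)) * x^2 := by
          linear_combination (b^2+d^2-1) * hQ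
        nlinarith [sq_nonneg ((b^2+d^2-1)*y + (a*b+c*d)*x)]
      · have hy2 : 0 < y^2 := by positivity
        have h1 : ((a^2+c^2-1)*x + (a*b+c*d)*y)^2 =
            ((a*b+c*d)^2 - (a^2+c^2-1)*(b^2+d^2-1)) * y^2 := by
          linear_combination (a^2+c^2-1) * hQ
        nlinarith [sq_nonneg ((a^2+c^2-1)*x + (a*b+c*d)*y)]
    nlinarith [key]
  · intro hge
    have key : (a*b+c*d)^2 - (a^2+c^2-1)*(b^2+d^2-1) ≥ 0 := by nlinarith [hge]
    by_cases hP : a^2+c^2-1 = 0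
    · refine ⟨(WithLp.equiv 2 (Fin 2 → ℝ)).symm ![1, 0], ?_, ?_⟩
      · intro h0
        have := congrFun (congrArg (WithLp.equiv 2 (Fin 2 → ℝ)) h0) 0
        simp at this
      · rw [norm_cond_aux]
        simp
        nlinarith [hP]
    · set s := Real.sqrt ((a*b+c*d)^2 - (a^2+c^2-1)*(b^2+d^2-1)) with hs
      have hs2 : s^2 = (a*b+c*d)^2 - (a^2+c^2-1)*(b^2+d^2-1) := Real.sq_sqrt key
      set x := (-(a*b+c*d) + s) / (a^2+c^2-1) with hxdef
      refine ⟨(WithLp.equiv 2 (Fin 2 → ℝ)).symm ![x, 1], ?_, ?_⟩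
      · intro h0
        have := congrFun (congrArg (WithLp.equiv 2 (Fin 2 → ℝ)) h0) 1
        simp at this
      · rw [norm_cond_aux]
        simp only [WithLp.equiv_symm_apply, WithLp.ofLp_toLp, Matrix.cons_val_zero, Matrix.cons_val_one,
          Matrix.head_cons]
        have hx : (a^2+c^2-1) * x = -(a*b+c*d) + s := by
          rw [hxdef]
          field_simp
        have hQ : (a^2+c^2-1)*x^2 + 2*(a*b+c*d)*x + (b^2+d^2-1) = 0 := by
          have h2 : (a^2+c^2-1) * ((a^2+c^2-1)*x^2 + 2*(a*b+c*d)*x + (b^2+d^2-1)) = 0 := by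
            linear_combination ((a^2+c^2-1)*x + (a*b+c*d) + s) * hx + hs2
          rcases mul_eq_zero.mp h2 with h | h
          · exact absurd h hP
          · exact h
        linear_combination hQ
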